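/- arXiv:0912.2116 — 4 statements merged into one kernel-verified Lean document; each statement's English description precedes it below -/
import Mathlib

section
/- Every divisor of G_k = 2^(2k+1) + 2^(k+1) + 1 greater than 1 is congruent to 1 modulo 4. -/
lemma prime_dvd_G_mod_four (k : ℕ) (p : ℕ) (hp : p.Prime)
    (hdvd : p ∣ 2 ^ (2 * k + 1) + 2 ^ (k + 1) + 1) : p % 4 = 1 := by
  have hodd : p ≠ 2 := by
    rintro rfl
    have h1 : (2:ℕ) ∣ 2 ^ (2 * k + 1) := dvd_pow_self 2 (Nat.succ_ne_zero _)
    have h2 : (2:ℕ) ∣ 2 ^ (k + 1) := dvd_pow_self 2 (Nat.succ_ne_zero _)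
    omega
  haveI : Fact p.Prime := ⟨hp⟩
  have hG : 2 ^ (2 * k + 1) + 2 ^ (k + 1) + 1 = (2 ^ k + 1) ^ 2 + (2 ^ k) ^ 2 := by ring
  rw [hG] at hdvd
  have hz : ((2 ^ k + 1 : ℕ) : ZMod p) ^ 2 + ((2 ^ k : ℕ) : ZMod p) ^ 2 = 0 := by
    have := (ZMod.natCast_eq_zero_iff _ p).mpr hdvd
    push_cast at this ⊢
    linear_combination this
  have h2ne : (2 : ZMod p) ≠ 0 := by
    intro h
    have := (ZMod.natCast_eq_zero_iff 2 p).mp (by exact_mod_cast h)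
    have := (Nat.prime_dvd_prime_iff_eq hp Nat.prime_two).mp this
    exact hodd this
  have hune : ((2 ^ k : ℕ) : ZMod p) ≠ 0 := by
    push_cast
    exact pow_ne_zero _ h2ne
  have hsq : IsSquare (-1 : ZMod p) := by
    refine ⟨((2 ^ k + 1 : ℕ) : ZMod p) * (((2 ^ k : ℕ) : ZMod p))⁻¹, ?_⟩
    push_cast at hz ⊢
    field_simp
    linear_combination -hz
  have h3 : p % 4 ≠ 3 := (ZMod.exists_sq_eq_neg_one_iff (p := p)).mp hsq
  have h2 : p % 2 = 1 := Nat.odd_iff.mp (hp.eq_two_or_odd'.resolve_left hodd)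
  omega

theorem G_divisor_one_mod_four (k : ℕ) (hk : 0 < k) (d : ℕ)
    (hd : d ∣ 2 ^ (2 * k + 1) + 2 ^ (k + 1) + 1) (hd1 : 1 < d) :
    d % 4 = 1 := by
  induction d using Nat.strong_induction_on with
  | _ d ih =>
    obtain ⟨p, hp, hpd⟩ := Nat.exists_prime_and_dvd (by omega : d ≠ 1)
    have hpG : p ∣ 2 ^ (2 * k + 1) + 2 ^ (k + 1) + 1 := hpd.trans hd
    have hp4 := prime_dvd_G_mod_four k p hp hpG
    obtain ⟨m, rfl⟩ := hpd
    have hm0 : 0 < m := by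
      rcases Nat.eq_zero_or_pos m with h | h
      · simp [h] at hd1
      · exact h
    rcases Nat.lt_or_ge 1 m with hm1 | hm1
    · have hmlt : m < p * m := (Nat.lt_mul_iff_one_lt_left hm0).mpr hp.one_lt
      have hmd : m ∣ 2 ^ (2 * k + 1) + 2 ^ (k + 1) + 1 := (dvd_mul_left m p).trans hd
      have hm4 := ih m hmlt hmd hm1
      rw [Nat.mul_mod, hp4, hm4]
    · have : m = 1 := by omega
      subst this
      simpa using hp4
end

section
/- Suppose G_k is prime. Then 3 is a quadratic non-residue modulo G_k if and only if k is even. -/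
lemma two_eq_neg_one_zmod3 : (2 : ZMod 3) = -1 := by decide

lemma neg_one_not_square_zmod3 : ¬ IsSquare (-1 : ZMod 3) := by decide

theorem three_qnr_G (k : ℕ) (hk : 0 < k)
    (hp : Nat.Prime (2 ^ (2 * k + 1) + 2 ^ (k + 1) + 1)) :
    ¬ IsSquare (3 : ZMod (2 ^ (2 * k + 1) + 2 ^ (k + 1) + 1)) ↔ Even k := by
  haveI : Fact (Nat.Prime (2 ^ (2 * k + 1) + 2 ^ (k + 1) + 1)) := ⟨hp⟩
  haveI : Fact (Nat.Prime 3) := ⟨by norm_num⟩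
  have hd1 : (4:ℕ) ∣ 2 ^ (2 * k + 1) := by
    calc (4:ℕ) = 2 ^ 2 := rfl
    _ ∣ 2 ^ (2 * k + 1) := pow_dvd_pow 2 (by omega)
  have hd2 : (4:ℕ) ∣ 2 ^ (k + 1) := by
    calc (4:ℕ) = 2 ^ 2 := rfl
    _ ∣ 2 ^ (k + 1) := pow_dvd_pow 2 (by omega)
  have h4 : (2 ^ (2 * k + 1) + 2 ^ (k + 1) + 1) % 4 = 1 := by omega
  have key := ZMod.exists_sq_eq_prime_iff_of_mod_four_eq_one
    (p := 2 ^ (2 * k + 1) + 2 ^ (k + 1) + 1) (q := 3) h4 (by norm_num)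
  rw [show ((3:ℕ) : ZMod (2 ^ (2 * k + 1) + 2 ^ (k + 1) + 1)) = 3 by push_cast; ring] at key
  rw [key]
  have hcast : ((2 ^ (2 * k + 1) + 2 ^ (k + 1) + 1 : ℕ) : ZMod 3)
      = (-1 : ZMod 3) ^ (k + 1) := by
    push_cast
    rw [two_eq_neg_one_zmod3]
    have hodd : Odd (2 * k + 1) := ⟨k, by ring⟩
    rw [hodd.neg_one_pow]
    ring
  rw [hcast]
  rcases Nat.even_or_odd k with he | ho
  · rw [(he.add_one).neg_one_pow]
    simp only [he, iff_true]
    exact neg_one_not_square_zmod3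
  · rw [(ho.add_one).neg_one_pow]
    simp only [Nat.not_even_iff_odd.mpr ho, iff_false, not_not]
    exact IsSquare.one
end

section
/- Suppose G_k is prime and k ≡ 1 (mod 4). Then 5 is a quadratic non-residue modulo G_k. -/
lemma pow_four_mod_five (m : ℕ) : 2 ^ (4 * m) % 5 = 1 := by
  induction m with
  | zero => rfl
  | succ n ih =>
    have : 4 * (n + 1) = 4 * n + 4 := by ring
    rw [this, pow_add, Nat.mul_mod, ih]
    decide

lemma G_mod_five (k : ℕ) (h : k % 4 = 1) :
    (2 ^ (2 * k + 1) + 2 ^ (k + 1) + 1) % 5 = 3 := by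
  obtain ⟨m, rfl⟩ : ∃ m, k = 4 * m + 1 := ⟨k / 4, by omega⟩
  have h1 : 2 * (4 * m + 1) + 1 = 4 * (2 * m) + 3 := by ring
  have h2 : (4 * m + 1) + 1 = 4 * m + 2 := by ring
  rw [h1, h2, pow_add, pow_add, Nat.add_mod, Nat.add_mod (2 ^ (4 * (2 * m)) * 2 ^ 3),
    Nat.mul_mod, Nat.mul_mod (2 ^ (4 * m)), pow_four_mod_five, pow_four_mod_five]
  decide

instance fact_prime_five : Fact (Nat.Prime 5) := ⟨by norm_num⟩

lemma leg_five_three : legendreSym 5 3 = -1 := by decide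

theorem five_qnr_G (k : ℕ) (hk : 0 < k) (h : k % 4 = 1)
    (hp : Nat.Prime (2 ^ (2 * k + 1) + 2 ^ (k + 1) + 1)) :
    ¬ IsSquare (5 : ZMod (2 ^ (2 * k + 1) + 2 ^ (k + 1) + 1)) := by
  set G := 2 ^ (2 * k + 1) + 2 ^ (k + 1) + 1 with hG
  haveI : Fact (Nat.Prime G) := ⟨hp⟩
  have hG2 : G ≠ 2 := by
    have : 2 ^ (2 * k + 1) % 2 = 0 := Nat.pow_mod 2 _ 2 ▸ by simp [Nat.pow_mod]
    have h2 : G % 2 = 1 := by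
      simp [hG, Nat.add_mod, Nat.pow_mod]
    omega
  have hmod : G % 5 = 3 := G_mod_five k h
  have key : legendreSym G ((5:ℕ):ℤ) = -1 := by
    rw [legendreSym.quadratic_reciprocity_one_mod_four (by norm_num) hG2]
    rw [legendreSym.mod 5 G]
    have : (G : ℤ) % ((5:ℕ):ℤ) = 3 := by
      rw [← Int.natCast_mod, hmod]; rfl
    rw [this]
    exact leg_five_three
  rw [show (5 : ZMod G) = ((5:ℕ) : ZMod G) by norm_cast,
    ← legendreSym.eq_neg_one_iff' (p := G)]
  exact key
end

section
/- Suppose G_k is prime with k ≥ 1. Then 7 is a quadratic non-residue modulo G_k. -/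
private lemma aux5 : ¬IsSquare ((5:ℕ) : ZMod 7) := by decide
private lemma aux6 : ¬IsSquare ((6:ℕ) : ZMod 7) := by decide

theorem seven_qnr_G (k : ℕ) (hk : 1 ≤ k)
    (hp : Nat.Prime (2 ^ (2 * k + 1) + 2 ^ (k + 1) + 1)) :
    ¬ IsSquare (7 : ZMod (2 ^ (2 * k + 1) + 2 ^ (k + 1) + 1)) := by
  set n := 2 ^ (2 * k + 1) + 2 ^ (k + 1) + 1 with hn
  haveI : Fact n.Prime := ⟨hp⟩
  -- periodicity of 2^m mod 7 and mod 4
  have cyc : ∀ m : ℕ, 2 ^ m % 7 = 2 ^ (m % 3) % 7 := by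
    intro m
    conv_lhs => rw [← Nat.div_add_mod m 3, pow_add, pow_mul]
    rw [Nat.mul_mod, Nat.pow_mod]
    norm_num
  have h4 : n % 4 = 1 := by
    have d1 : (4 : ℕ) ∣ 2 ^ (2 * k + 1) := by
      calc (4:ℕ) = 2 ^ 2 := by norm_num
      _ ∣ 2 ^ (2 * k + 1) := pow_dvd_pow 2 (by omega)
    have d2 : (4 : ℕ) ∣ 2 ^ (k + 1) := by
      calc (4:ℕ) = 2 ^ 2 := by norm_num
      _ ∣ 2 ^ (k + 1) := pow_dvd_pow 2 (by omega)
    omega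
  have h7 : n % 7 = 5 ∨ n % 7 = 6 := by
    have c1 := cyc (2 * k + 1)
    have c2 := cyc (k + 1)
    have hr : k % 3 = 0 ∨ k % 3 = 1 ∨ k % 3 = 2 := by omega
    rcases hr with h | h | h <;>
    · have e1 : (2 * k + 1) % 3 = (2 * (k % 3) + 1) % 3 := by omega
      have e2 : (k + 1) % 3 = (k % 3 + 1) % 3 := by omega
      rw [h] at e1 e2
      norm_num at e1 e2
      rw [e1] at c1; rw [e2] at c2
      norm_num at c1 c2
      omega
  have key : legendreSym n 7 = -1 := by
    rw [jacobiSym.legendreSym.to_jacobiSym]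
    have hrec := jacobiSym.quadratic_reciprocity_one_mod_four h4 (by decide : Odd 7)
    rw [show (7:ℤ) = ((7:ℕ):ℤ) by norm_num, ← hrec, jacobiSym.mod_left]
    have hcast : (n:ℤ) % ((7:ℕ):ℤ) = ((n % 7 : ℕ) : ℤ) := by
      exact_mod_cast (Int.natCast_mod n 7).symm
    rw [hcast]
    haveI : Fact (Nat.Prime 7) := ⟨by norm_num⟩
    rcases h7 with h | h <;> rw [h, ← jacobiSym.legendreSym.to_jacobiSym,
      legendreSym.eq_neg_one_iff']
    · exact aux5
    · exact aux6
  have := (legendreSym.eq_neg_one_iff' (p := n)).mp key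
  simpa using this
end
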